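/- Let f, g be semi-invariants of a finite-dimensional complex Lie algebra g, a ∈ g*, and λ, μ ∈ ℂ nonzero. Define h(x) = f(a + λx) and k(x) = g(a + μx). Then {h,k} = 0 and {h,k}_a = 0, i.e. shifted semi-invariants pairwise commute with respect to both the Lie-Poisson bracket and the frozen argument bracket. -/

import Mathlib

open MvPolynomial

/-- The Lie–Poisson bracket on `S(g) = ℂ[x₁,…,xₙ]`, where `c` are the structure
constants of `g` in a fixed basis. -/
noncomputable def poissonBracket (n : ℕ) (c : Fin n → Fin n → Fin n → ℂ)
    (f g : MvPolynomial (Fin n) ℂ) : MvPolynomial (Fin n) ℂ :=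
  ∑ i : Fin n, ∑ j : Fin n,
    (∑ k : Fin n, C (c i j k) * X k) * pderiv i f * pderiv j g

/-- The frozen argument bracket at `a ∈ g*` (coordinates of `a` in the dual basis). -/
noncomputable def frozenBracket (n : ℕ) (c : Fin n → Fin n → Fin n → ℂ)
    (a : Fin n → ℂ) (f g : MvPolynomial (Fin n) ℂ) : MvPolynomial (Fin n) ℂ :=
  ∑ i : Fin n, ∑ j : Fin n,
    C (∑ k : Fin n, c i j k * a k) * pderiv i f * pderiv j g

/-- `f` is a semi-invariant: there is a character `χ` of `g` (vanishing on `[g,g]`)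
with `{f,h} = χ(dh)·f` for all `h`. -/
def IsSemiInvariant (n : ℕ) (c : Fin n → Fin n → Fin n → ℂ)
    (f : MvPolynomial (Fin n) ℂ) : Prop :=
  ∃ χ : Fin n → ℂ, (∀ i j, ∑ k, c i j k * χ k = 0) ∧
    ∀ h : MvPolynomial (Fin n) ℂ,
      poissonBracket n c f h = (∑ i, C (χ i) * pderiv i h) * f

/-- The shifted polynomial `x ↦ g(a + λx)`. -/
noncomputable def shiftPoly (n : ℕ) (a : Fin n → ℂ) (l : ℂ)
    (g : MvPolynomial (Fin n) ℂ) : MvPolynomial (Fin n) ℂ :=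
  bind₁ (fun k => C (a k) + C l * X k) g

open Finset

variable {n : ℕ}

noncomputable def bb (c : Fin n → Fin n → Fin n → ℂ) (i j : Fin n) : MvPolynomial (Fin n) ℂ :=
  ∑ k, C (c i j k) * X k

noncomputable def Dop (χ : Fin n → ℂ) (u : MvPolynomial (Fin n) ℂ) : MvPolynomial (Fin n) ℂ :=
  ∑ i, C (χ i) * pderiv i u

lemma Dop_add (χ : Fin n → ℂ) (u v : MvPolynomial (Fin n) ℂ) :
    Dop χ (u + v) = Dop χ u + Dop χ v := by
  simp [Dop, mul_add, Finset.sum_add_distrib]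

lemma Dop_zero (χ : Fin n → ℂ) : Dop χ 0 = 0 := by simp [Dop]

lemma Dop_C (χ : Fin n → ℂ) (r : ℂ) : Dop χ (C r) = 0 := by simp [Dop]

lemma Dop_mul (χ : Fin n → ℂ) (u v : MvPolynomial (Fin n) ℂ) :
    Dop χ (u * v) = Dop χ u * v + u * Dop χ v := by
  simp only [Dop, pderiv_mul, mul_add, Finset.sum_add_distrib]
  congr 1
  · rw [Finset.sum_mul]; exact Finset.sum_congr rfl fun i _ => by ring
  · rw [Finset.mul_sum]; exact Finset.sum_congr rfl fun i _ => by ring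

lemma Dop_C_mul (χ : Fin n → ℂ) (r : ℂ) (u : MvPolynomial (Fin n) ℂ) :
    Dop χ (C r * u) = C r * Dop χ u := by
  rw [Dop_mul, Dop_C]; ring

lemma Dop_sum (χ : Fin n → ℂ) {ι : Type*} (s : Finset ι) (f : ι → MvPolynomial (Fin n) ℂ) :
    Dop χ (∑ x ∈ s, f x) = ∑ x ∈ s, Dop χ (f x) := by
  classical
  induction s using Finset.induction_on with
  | empty => simp [Dop_zero]
  | @insert x s h ih => rw [Finset.sum_insert h, Finset.sum_insert h, Dop_add, ih]

lemma pderiv_pderiv' (i j : Fin n) (p : MvPolynomial (Fin n) ℂ) :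
    pderiv i (pderiv j p) = pderiv j (pderiv i p) := by
  induction p using MvPolynomial.induction_on with
  | C a => simp
  | add p q hp hq => simp [hp, hq]
  | mul_X p k hp =>
    simp only [pderiv_mul, map_add, hp, pderiv_mul]
    by_cases h : i = k <;> by_cases h' : j = k <;> simp [h, h']

lemma pderiv_Dop (χ : Fin n → ℂ) (i : Fin n) (u : MvPolynomial (Fin n) ℂ) :
    pderiv i (Dop χ u) = Dop χ (pderiv i u) := by
  simp only [Dop, map_sum, pderiv_C_mul]
  exact Finset.sum_congr rfl fun j _ => by rw [pderiv_pderiv']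

lemma pderiv_bb (c : Fin n → Fin n → Fin n → ℂ) (i j m : Fin n) :
    pderiv m (bb c i j) = C (c i j m) := by
  simp only [bb, map_sum, pderiv_C_mul]
  rw [Finset.sum_eq_single m]
  · simp
  · intro k _ hk; rw [pderiv_X_of_ne hk]; ring
  · intro h; exact absurd (Finset.mem_univ m) h

lemma Dop_bb (c : Fin n → Fin n → Fin n → ℂ) (χ : Fin n → ℂ) (i j : Fin n)
    (hχ : ∑ k, c i j k * χ k = 0) : Dop χ (bb c i j) = 0 := by
  simp only [Dop, pderiv_bb, ← map_mul, ← map_sum]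
  rw [show ∑ x, χ x * c i j x = ∑ k, c i j k * χ k from Finset.sum_congr rfl fun k _ => mul_comm _ _,
    hχ, map_zero]

lemma totalDegree_pderiv_le' (i : Fin n) (p : MvPolynomial (Fin n) ℂ) {d : ℕ}
    (hp : p.totalDegree ≤ d + 1) : (pderiv i p).totalDegree ≤ d := by
  conv_lhs => rw [p.as_sum]
  rw [map_sum]
  refine totalDegree_finsetSum_le fun s hs => ?_
  rw [pderiv_monomial]
  by_cases h : s i = 0
  · simp [h]
  · refine (totalDegree_monomial_le _ _).trans ?_
    show (s - Finsupp.single i 1).sum (fun _ e => e) ≤ d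
    have h1 : Finsupp.single i 1 ≤ s := by
      rw [Finsupp.single_le_iff]; omega
    have h2 : (s - Finsupp.single i 1) + Finsupp.single i 1 = s := tsub_add_cancel_of_le h1
    have h3 : ((s - Finsupp.single i 1) + Finsupp.single i 1).sum (fun _ e => e)
        = (s - Finsupp.single i 1).sum (fun _ e => e) + 1 := by
      rw [Finsupp.sum_add_index' (fun _ => rfl) (fun _ _ _ => rfl), Finsupp.sum_single_index rfl]
    have h4 : s.sum (fun _ e => e) ≤ d + 1 := le_trans (le_totalDegree hs) hp
    rw [h2] at h3
    omega

lemma pderiv_eq_zero_of_totalDegree_eq_zero {u : MvPolynomial (Fin n) ℂ}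
    (h : u.totalDegree = 0) (i : Fin n) : pderiv i u = 0 := by
  conv_lhs => rw [u.as_sum]
  rw [map_sum]
  refine Finset.sum_eq_zero fun s hs => ?_
  rw [pderiv_monomial, (totalDegree_eq_zero_iff _ u).1 h s hs i, Nat.cast_zero, mul_zero, map_zero]

lemma totalDegree_Dop_le (χ : Fin n → ℂ) (u : MvPolynomial (Fin n) ℂ) {d : ℕ}
    (h : u.totalDegree ≤ d + 1) : (Dop χ u).totalDegree ≤ d := by
  refine totalDegree_finsetSum_le fun i _ => ?_
  calc (C (χ i) * pderiv i u).totalDegree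
      ≤ (C (χ i) : MvPolynomial (Fin n) ℂ).totalDegree + (pderiv i u).totalDegree :=
        totalDegree_mul _ _
    _ ≤ d := by rw [totalDegree_C]; simpa using totalDegree_pderiv_le' i u h

lemma Dop_iter_eq_zero (χ : Fin n → ℂ) :
    ∀ (d : ℕ) (u : MvPolynomial (Fin n) ℂ), u.totalDegree ≤ d → (Dop χ)^[d + 1] u = 0
  | 0, u, h => by
    rw [Function.iterate_one]
    refine Finset.sum_eq_zero fun i _ => ?_
    rw [pderiv_eq_zero_of_totalDegree_eq_zero (Nat.le_zero.1 h) i, mul_zero]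
  | d + 1, u, h => by
    rw [Function.iterate_succ_apply]
    exact Dop_iter_eq_zero χ d (Dop χ u) (totalDegree_Dop_le χ u h)

def Weak (c : Fin n → Fin n → Fin n → ℂ) (f : MvPolynomial (Fin n) ℂ) (χ : Fin n → ℂ) : Prop :=
  ∀ j, ∑ i, bb c i j * pderiv i f = C (χ j) * f

lemma poissonBracket_eq (c : Fin n → Fin n → Fin n → ℂ) (f g : MvPolynomial (Fin n) ℂ) :
    poissonBracket n c f g = ∑ i, ∑ j, bb c i j * pderiv i f * pderiv j g := rfl

lemma weak_of_semi (c : Fin n → Fin n → Fin n → ℂ) (f : MvPolynomial (Fin n) ℂ) (χ : Fin n → ℂ)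
    (hsemi : ∀ h, poissonBracket n c f h = (∑ i, C (χ i) * pderiv i h) * f) :
    Weak c f χ := by
  intro j
  have h := hsemi (X j)
  simp only [poissonBracket_eq, pderiv_X, Pi.single_apply, mul_ite, mul_one, mul_zero,
    Finset.sum_ite_eq, Finset.mem_univ, if_true, ite_mul, zero_mul] at h
  exact h

lemma full_of_weak {c : Fin n → Fin n → Fin n → ℂ} {f : MvPolynomial (Fin n) ℂ} {χ : Fin n → ℂ}
    (hw : Weak c f χ) (h : MvPolynomial (Fin n) ℂ) :
    poissonBracket n c f h = Dop χ h * f := by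
  rw [poissonBracket_eq, Finset.sum_comm]
  calc ∑ j, ∑ i, bb c i j * pderiv i f * pderiv j h
      = ∑ j, (∑ i, bb c i j * pderiv i f) * pderiv j h := by
        refine Finset.sum_congr rfl fun j _ => ?_
        rw [Finset.sum_mul]
    _ = ∑ j, C (χ j) * f * pderiv j h := by
        refine Finset.sum_congr rfl fun j _ => ?_
        rw [hw j]
    _ = Dop χ h * f := by
        rw [Dop, Finset.sum_mul]
        exact Finset.sum_congr rfl fun j _ => by ring

lemma bb_skew {c : Fin n → Fin n → Fin n → ℂ} (hskew : ∀ i j k, c i j k = - c j i k)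
    (i j : Fin n) : bb c i j = - bb c j i := by
  simp only [bb, ← Finset.sum_neg_distrib]
  refine Finset.sum_congr rfl fun k _ => ?_
  rw [hskew i j k, map_neg]; ring

lemma poisson_antisymm {c : Fin n → Fin n → Fin n → ℂ} (hskew : ∀ i j k, c i j k = - c j i k)
    (f g : MvPolynomial (Fin n) ℂ) :
    poissonBracket n c f g = - poissonBracket n c g f := by
  rw [poissonBracket_eq, poissonBracket_eq, Finset.sum_comm, ← Finset.sum_neg_distrib]
  refine Finset.sum_congr rfl fun i _ => ?_
  rw [← Finset.sum_neg_distrib]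
  refine Finset.sum_congr rfl fun j _ => ?_
  rw [bb_skew hskew]
  ring

lemma pair_rel {c : Fin n → Fin n → Fin n → ℂ} (hskew : ∀ i j k, c i j k = - c j i k)
    {f g : MvPolynomial (Fin n) ℂ} {χf χg : Fin n → ℂ}
    (hwf : Weak c f χf) (hwg : Weak c g χg) :
    Dop χf g * f = - (Dop χg f * g) := by
  rw [← full_of_weak hwf g, poisson_antisymm hskew, full_of_weak hwg f]

lemma weak_Dop {c : Fin n → Fin n → Fin n → ℂ} {χf χg : Fin n → ℂ}
    (hχf : ∀ i j, ∑ k, c i j k * χf k = 0) {u : MvPolynomial (Fin n) ℂ}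
    (hw : Weak c u χg) : Weak c (Dop χf u) χg := by
  intro j
  calc ∑ i, bb c i j * pderiv i (Dop χf u)
      = ∑ i, (Dop χf (bb c i j * pderiv i u) - Dop χf (bb c i j) * pderiv i u) := by
        refine Finset.sum_congr rfl fun i _ => ?_
        rw [pderiv_Dop, Dop_mul]; ring
    _ = Dop χf (∑ i, bb c i j * pderiv i u) := by
        rw [Dop_sum]
        refine Finset.sum_congr rfl fun i _ => ?_
        rw [Dop_bb c χf i j (hχf i j)]; ring
    _ = C (χg j) * Dop χf u := by rw [hw j, Dop_C_mul]

lemma vanish {c : Fin n → Fin n → Fin n → ℂ} (hskew : ∀ i j k, c i j k = - c j i k)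
    {f g : MvPolynomial (Fin n) ℂ} {χf χg : Fin n → ℂ}
    (hwf : Weak c f χf) (hwg : Weak c g χg)
    (hχf : ∀ i j, ∑ k, c i j k * χf k = 0)
    (hg : g ≠ 0) : Dop χg f = 0 := by
  set v := Dop χg f with hv
  set u : ℕ → MvPolynomial (Fin n) ℂ := fun k => (Dop χf)^[k] g with hu
  have hu_succ : ∀ k, u (k + 1) = Dop χf (u k) := fun k => Function.iterate_succ_apply' _ _ _
  have hu_weak : ∀ k, Weak c (u k) χg := by
    intro k
    induction k with
    | zero => exact hwg
    | succ k ih => rw [hu_succ]; exact weak_Dop hχf ih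
  have hchain : ∀ k, f * u (k + 1) = - v * u k := by
    intro k
    have := pair_rel hskew hwf (hu_weak k)
    rw [hu_succ]
    calc f * Dop χf (u k) = Dop χf (u k) * f := mul_comm _ _
      _ = -(Dop χg f * u k) := this
      _ = - v * u k := by rw [← hv]; ring
  have hpow : ∀ k, f ^ k * u k = (- v) ^ k * g := by
    intro k
    induction k with
    | zero => simp [hu]
    | succ k ih =>
      calc f ^ (k + 1) * u (k + 1) = f ^ k * (f * u (k + 1)) := by ring
        _ = f ^ k * (- v * u k) := by rw [hchain k]
        _ = - v * (f ^ k * u k) := by ring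
        _ = - v * ((- v) ^ k * g) := by rw [ih]
        _ = (- v) ^ (k + 1) * g := by ring
  have hN : u (g.totalDegree + 1) = 0 := Dop_iter_eq_zero χf g.totalDegree g le_rfl
  have h0 : (- v) ^ (g.totalDegree + 1) * g = 0 := by
    rw [← hpow, hN, mul_zero]
  rcases mul_eq_zero.1 h0 with h | h
  · have := pow_eq_zero_iff (Nat.succ_ne_zero _) |>.1 h
    simpa using this
  · exact absurd h hg

lemma coWeak {c : Fin n → Fin n → Fin n → ℂ} (hskew : ∀ i j k, c i j k = - c j i k)
    {g : MvPolynomial (Fin n) ℂ} {χg : Fin n → ℂ} (hwg : Weak c g χg) (i : Fin n) :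
    ∑ j, bb c i j * pderiv j g = -(C (χg i) * g) := by
  calc ∑ j, bb c i j * pderiv j g = ∑ j, -(bb c j i * pderiv j g) := by
        refine Finset.sum_congr rfl fun j _ => ?_
        rw [bb_skew hskew]; ring
    _ = -(C (χg i) * g) := by rw [Finset.sum_neg_distrib, hwg i]

lemma S_zero {c : Fin n → Fin n → Fin n → ℂ} (hskew : ∀ i j k, c i j k = - c j i k)
    {f g : MvPolynomial (Fin n) ℂ} {χf χg : Fin n → ℂ}
    (hwf : Weak c f χf) (hwg : Weak c g χg)
    (hχf : ∀ i j, ∑ k, c i j k * χf k = 0)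
    (hχg : ∀ i j, ∑ k, c i j k * χg k = 0) (m : Fin n) :
    ∑ i, ∑ j, C (c i j m) * pderiv i f * pderiv j g = 0 := by
  set Sm := ∑ i, ∑ j, C (c i j m) * pderiv i f * pderiv j g with hSm
  set Am := ∑ i, ∑ j, bb c i j * pderiv m (pderiv i f) * pderiv j g with hAm
  set Bm := ∑ i, ∑ j, bb c i j * pderiv i f * pderiv m (pderiv j g) with hBm
  -- (1)
  have h1 : Sm + Am = Dop χf g * pderiv m f := by
    have e1 : ∀ j, ∑ i, (C (c i j m) * pderiv i f + bb c i j * pderiv m (pderiv i f))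
        = C (χf j) * pderiv m f := by
      intro j
      have := congrArg (pderiv m) (hwf j)
      rw [map_sum, pderiv_C_mul] at this
      rw [← this]
      refine Finset.sum_congr rfl fun i _ => ?_
      rw [pderiv_mul, pderiv_bb]
    calc Sm + Am = ∑ j, ∑ i, (C (c i j m) * pderiv i f + bb c i j * pderiv m (pderiv i f))
          * pderiv j g := by
          rw [hSm, hAm]
          rw [show (∑ i, ∑ j, C (c i j m) * pderiv i f * pderiv j g)
            = ∑ j, ∑ i, C (c i j m) * pderiv i f * pderiv j g from Finset.sum_comm]
          rw [show (∑ i, ∑ j, bb c i j * pderiv m (pderiv i f) * pderiv j g)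
            = ∑ j, ∑ i, bb c i j * pderiv m (pderiv i f) * pderiv j g from Finset.sum_comm]
          rw [← Finset.sum_add_distrib]
          refine Finset.sum_congr rfl fun j _ => ?_
          rw [← Finset.sum_add_distrib]
          refine Finset.sum_congr rfl fun i _ => ?_
          ring
      _ = ∑ j, (∑ i, (C (c i j m) * pderiv i f + bb c i j * pderiv m (pderiv i f)))
          * pderiv j g := by
          refine Finset.sum_congr rfl fun j _ => (Finset.sum_mul ..).symm
      _ = ∑ j, C (χf j) * pderiv m f * pderiv j g := by
          refine Finset.sum_congr rfl fun j _ => ?_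
          rw [e1 j]
      _ = Dop χf g * pderiv m f := by
          rw [Dop, Finset.sum_mul]
          refine Finset.sum_congr rfl fun j _ => ?_
          ring
  -- (2)
  have h2 : Sm + Bm = -(Dop χg f * pderiv m g) := by
    have e2 : ∀ i, ∑ j, (C (c i j m) * pderiv j g + bb c i j * pderiv m (pderiv j g))
        = -(C (χg i) * pderiv m g) := by
      intro i
      have := congrArg (pderiv m) (coWeak hskew hwg i)
      rw [map_sum, map_neg, pderiv_C_mul] at this
      rw [← this]
      refine Finset.sum_congr rfl fun j _ => ?_
      rw [pderiv_mul, pderiv_bb]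
    calc Sm + Bm = ∑ i, (∑ j, (C (c i j m) * pderiv j g + bb c i j * pderiv m (pderiv j g)))
          * pderiv i f := by
          rw [hSm, hBm, ← Finset.sum_add_distrib]
          refine Finset.sum_congr rfl fun i _ => ?_
          rw [Finset.sum_mul, ← Finset.sum_add_distrib]
          refine Finset.sum_congr rfl fun j _ => ?_
          ring
      _ = ∑ i, -(C (χg i) * pderiv m g) * pderiv i f := by
          refine Finset.sum_congr rfl fun i _ => ?_
          rw [e2 i]
      _ = -(Dop χg f * pderiv m g) := by
          rw [Dop, Finset.sum_mul, ← Finset.sum_neg_distrib]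
          refine Finset.sum_congr rfl fun i _ => ?_
          ring
  -- (3)
  have h3 : Sm + Am + Bm = pderiv m (poissonBracket n c f g) := by
    rw [poissonBracket_eq, map_sum]
    rw [hSm, hAm, hBm, ← Finset.sum_add_distrib, ← Finset.sum_add_distrib]
    refine Finset.sum_congr rfl fun i _ => ?_
    rw [map_sum, ← Finset.sum_add_distrib, ← Finset.sum_add_distrib]
    refine Finset.sum_congr rfl fun j _ => ?_
    rw [pderiv_mul, pderiv_mul, pderiv_bb]
    ring
  -- (4)
  have h4 : poissonBracket n c f g = Dop χf g * f := full_of_weak hwf g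
  have key : Sm = Dop χf g * pderiv m f + -(Dop χg f * pderiv m g)
      - pderiv m (Dop χf g * f) := by
    rw [← h1, ← h2, ← h4, ← h3]; ring
  by_cases hf0 : f = 0
  · have hz : Dop χg f = 0 := by rw [hf0, Dop_zero]
    rw [key, hz, hf0]
    simp
  by_cases hg0 : g = 0
  · have hz : Dop χf g = 0 := by rw [hg0, Dop_zero]
    rw [key, hz, hg0]
    simp
  · have hz1 : Dop χf g = 0 := vanish hskew hwg hwf hχg hf0
    have hz2 : Dop χg f = 0 := vanish hskew hwf hwg hχf hg0
    rw [key, hz1, hz2]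
    simp

lemma frozen_unshifted_zero {c : Fin n → Fin n → Fin n → ℂ} (hskew : ∀ i j k, c i j k = - c j i k)
    {f g : MvPolynomial (Fin n) ℂ} {χf χg : Fin n → ℂ}
    (hwf : Weak c f χf) (hwg : Weak c g χg)
    (hχf : ∀ i j, ∑ k, c i j k * χf k = 0)
    (hχg : ∀ i j, ∑ k, c i j k * χg k = 0) (a : Fin n → ℂ) :
    ∑ i, ∑ j, C (∑ k, c i j k * a k) * pderiv i f * pderiv j g = 0 := by
  have key : ∀ i j : Fin n, C (∑ k, c i j k * a k) * pderiv i f * pderiv j g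
      = ∑ k, C (a k) * (C (c i j k) * pderiv i f * pderiv j g) := by
    intro i j
    rw [map_sum, Finset.sum_mul, Finset.sum_mul]
    refine Finset.sum_congr rfl fun k _ => ?_
    rw [map_mul]; ring
  calc ∑ i, ∑ j, C (∑ k, c i j k * a k) * pderiv i f * pderiv j g
      = ∑ i, ∑ j, ∑ k, C (a k) * (C (c i j k) * pderiv i f * pderiv j g) := by
        exact Finset.sum_congr rfl fun i _ => Finset.sum_congr rfl fun j _ => key i j
    _ = ∑ k, ∑ i, ∑ j, C (a k) * (C (c i j k) * pderiv i f * pderiv j g) := by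
        rw [show (∑ i, ∑ j, ∑ k, C (a k) * (C (c i j k) * pderiv i f * pderiv j g))
          = ∑ i, ∑ k, ∑ j, C (a k) * (C (c i j k) * pderiv i f * pderiv j g) from
            Finset.sum_congr rfl fun i _ => Finset.sum_comm]
        exact Finset.sum_comm
    _ = ∑ k : Fin n, C (a k) * (∑ i, ∑ j, C (c i j k) * pderiv i f * pderiv j g) := by
        refine Finset.sum_congr rfl fun k _ => ?_
        rw [Finset.mul_sum]
        exact Finset.sum_congr rfl fun i _ => (Finset.mul_sum ..).symm
    _ = 0 := by
        refine Finset.sum_eq_zero fun k _ => ?_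
        rw [S_zero hskew hwf hwg hχf hχg k, mul_zero]

lemma pderiv_shift (a : Fin n → ℂ) (l : ℂ) (u : MvPolynomial (Fin n) ℂ) (i : Fin n) :
    pderiv i (shiftPoly n a l u) = C l * shiftPoly n a l (pderiv i u) := by
  unfold shiftPoly
  induction u using MvPolynomial.induction_on with
  | C r => simp
  | add p q hp hq => simp [map_add, hp, hq, mul_add]
  | mul_X p k hp =>
    by_cases h : i = k
    · subst h
      simp only [map_mul, bind₁_X_right, pderiv_mul, hp, map_add, pderiv_C, pderiv_C_mul,
        pderiv_X_self, mul_one, zero_add, bind₁_C_right]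
      ring
    · simp only [map_mul, bind₁_X_right, pderiv_mul, hp, map_add, pderiv_C, pderiv_C_mul,
        pderiv_X_of_ne (Ne.symm h), mul_zero, zero_add, add_zero, bind₁_C_right]
      ring

lemma shift_bb (c : Fin n → Fin n → Fin n → ℂ) (a : Fin n → ℂ) (l : ℂ) (i j : Fin n) :
    bind₁ (fun k => C (a k) + C l * X k) (bb c i j)
      = C (∑ k, c i j k * a k) + C l * bb c i j := by
  rw [bb, map_sum, map_sum, Finset.mul_sum, ← Finset.sum_add_distrib]
  refine Finset.sum_congr rfl fun k _ => ?_
  rw [map_mul, bind₁_X_right, bind₁_C_right, map_mul]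
  ring

lemma rearrange {R : Type*} [CommRing R] {n : ℕ} (A : Fin n → Fin n → R) (F G : Fin n → R) :
    ∑ j, (∑ i, A i j * F i) * G j = ∑ i, ∑ j, A i j * F i * G j := by
  calc ∑ j, (∑ i, A i j * F i) * G j = ∑ j, ∑ i, A i j * F i * G j :=
        Finset.sum_congr rfl fun j _ => Finset.sum_mul ..
    _ = ∑ i, ∑ j, A i j * F i * G j := Finset.sum_comm

lemma split2 {R : Type*} [CommRing R] {n : ℕ} (A B : Fin n → Fin n → R) :
    ∑ i : Fin n, ∑ j : Fin n, (A i j + B i j)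
      = (∑ i, ∑ j, A i j) + (∑ i, ∑ j, B i j) := by
  rw [← Finset.sum_add_distrib]
  exact Finset.sum_congr rfl fun i _ => Finset.sum_add_distrib

lemma mulconst2 {R : Type*} [CommRing R] {n : ℕ} (r : R) (A : Fin n → Fin n → R) :
    ∑ i : Fin n, ∑ j : Fin n, r * A i j = r * ∑ i, ∑ j, A i j := by
  rw [Finset.mul_sum]
  exact Finset.sum_congr rfl fun i _ => (Finset.mul_sum ..).symm

lemma E1 {c : Fin n → Fin n → Fin n → ℂ}
    {f g : MvPolynomial (Fin n) ℂ} {χf : Fin n → ℂ}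
    (hwf : Weak c f χf) (a : Fin n → ℂ) (l μ : ℂ) :
    (∑ i, ∑ j, C (∑ k, c i j k * a k) * shiftPoly n a l (pderiv i f)
      * shiftPoly n a μ (pderiv j g))
    + C l * (∑ i, ∑ j, bb c i j * shiftPoly n a l (pderiv i f)
      * shiftPoly n a μ (pderiv j g))
    = shiftPoly n a μ (Dop χf g) * shiftPoly n a l f := by
  have hid : ∀ j, ∑ i, (C (∑ k, c i j k * a k) + C l * bb c i j)
      * shiftPoly n a l (pderiv i f) = C (χf j) * shiftPoly n a l f := by
    intro j
    have h := congrArg (bind₁ (fun k => C (a k) + C l * X k)) (hwf j)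
    rw [map_sum, map_mul, bind₁_C_right] at h
    calc ∑ i, (C (∑ k, c i j k * a k) + C l * bb c i j) * shiftPoly n a l (pderiv i f)
        = ∑ i, bind₁ (fun k => C (a k) + C l * X k) (bb c i j * pderiv i f) := by
          refine Finset.sum_congr rfl fun i _ => ?_
          rw [map_mul, shift_bb]
          rfl
      _ = C (χf j) * shiftPoly n a l f := h
  calc (∑ i, ∑ j, C (∑ k, c i j k * a k) * shiftPoly n a l (pderiv i f)
        * shiftPoly n a μ (pderiv j g))
      + C l * (∑ i, ∑ j, bb c i j * shiftPoly n a l (pderiv i f)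
        * shiftPoly n a μ (pderiv j g))
      = ∑ i, ∑ j, (C (∑ k, c i j k * a k) + C l * bb c i j)
        * shiftPoly n a l (pderiv i f) * shiftPoly n a μ (pderiv j g) := by
        rw [← mulconst2, ← split2]
        refine Finset.sum_congr rfl fun i _ => Finset.sum_congr rfl fun j _ => ?_
        ring
    _ = ∑ j, (∑ i, (C (∑ k, c i j k * a k) + C l * bb c i j)
        * shiftPoly n a l (pderiv i f)) * shiftPoly n a μ (pderiv j g) :=
        (rearrange _ _ _).symm
    _ = ∑ j, C (χf j) * shiftPoly n a l f * shiftPoly n a μ (pderiv j g) := by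
        refine Finset.sum_congr rfl fun j _ => ?_
        rw [hid j]
    _ = shiftPoly n a μ (Dop χf g) * shiftPoly n a l f := by
        have : shiftPoly n a μ (Dop χf g) = ∑ j, C (χf j) * shiftPoly n a μ (pderiv j g) := by
          rw [Dop]
          show bind₁ _ _ = _
          rw [map_sum]
          exact Finset.sum_congr rfl fun j _ => by rw [map_mul, bind₁_C_right]; rfl
        rw [this, Finset.sum_mul]
        exact Finset.sum_congr rfl fun j _ => by ring

lemma E2 {c : Fin n → Fin n → Fin n → ℂ} (hskew : ∀ i j k, c i j k = - c j i k)
    {f g : MvPolynomial (Fin n) ℂ} {χg : Fin n → ℂ}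
    (hwg : Weak c g χg) (a : Fin n → ℂ) (l μ : ℂ) :
    (∑ i, ∑ j, C (∑ k, c i j k * a k) * shiftPoly n a l (pderiv i f)
      * shiftPoly n a μ (pderiv j g))
    + C μ * (∑ i, ∑ j, bb c i j * shiftPoly n a l (pderiv i f)
      * shiftPoly n a μ (pderiv j g))
    = -(shiftPoly n a l (Dop χg f) * shiftPoly n a μ g) := by
  have hid : ∀ i, ∑ j, (C (∑ k, c i j k * a k) + C μ * bb c i j)
      * shiftPoly n a μ (pderiv j g) = -(C (χg i) * shiftPoly n a μ g) := by
    intro i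
    have h := congrArg (bind₁ (fun k => C (a k) + C μ * X k)) (coWeak hskew hwg i)
    rw [map_sum, map_neg, map_mul, bind₁_C_right] at h
    calc ∑ j, (C (∑ k, c i j k * a k) + C μ * bb c i j) * shiftPoly n a μ (pderiv j g)
        = ∑ j, bind₁ (fun k => C (a k) + C μ * X k) (bb c i j * pderiv j g) := by
          refine Finset.sum_congr rfl fun j _ => ?_
          rw [map_mul, shift_bb]
          rfl
      _ = -(C (χg i) * shiftPoly n a μ g) := h
  calc (∑ i, ∑ j, C (∑ k, c i j k * a k) * shiftPoly n a l (pderiv i f)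
        * shiftPoly n a μ (pderiv j g))
      + C μ * (∑ i, ∑ j, bb c i j * shiftPoly n a l (pderiv i f)
        * shiftPoly n a μ (pderiv j g))
      = ∑ i, (∑ j, (C (∑ k, c i j k * a k) + C μ * bb c i j)
        * shiftPoly n a μ (pderiv j g)) * shiftPoly n a l (pderiv i f) := by
        rw [← mulconst2, ← split2]
        refine Finset.sum_congr rfl fun i _ => ?_
        rw [Finset.sum_mul]
        refine Finset.sum_congr rfl fun j _ => ?_
        ring
    _ = ∑ i, -(C (χg i) * shiftPoly n a μ g) * shiftPoly n a l (pderiv i f) := by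
        refine Finset.sum_congr rfl fun i _ => ?_
        rw [hid i]
    _ = -(shiftPoly n a l (Dop χg f) * shiftPoly n a μ g) := by
        have : shiftPoly n a l (Dop χg f) = ∑ i, C (χg i) * shiftPoly n a l (pderiv i f) := by
          rw [Dop]
          show bind₁ _ _ = _
          rw [map_sum]
          exact Finset.sum_congr rfl fun i _ => by rw [map_mul, bind₁_C_right]; rfl
        rw [this, Finset.sum_mul, ← Finset.sum_neg_distrib]
        exact Finset.sum_congr rfl fun i _ => by ring

theorem stmt5 (n : ℕ) (c : Fin n → Fin n → Fin n → ℂ)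
    (hskew : ∀ i j k, c i j k = - c j i k)
    (hjacobi : ∀ i j l m, (∑ k, c i j k * c k l m) + (∑ k, c j l k * c k i m) +
      (∑ k, c l i k * c k j m) = 0)
    (f g : MvPolynomial (Fin n) ℂ)
    (hf : IsSemiInvariant n c f) (hg : IsSemiInvariant n c g)
    (a : Fin n → ℂ) (l μ : ℂ) (hl : l ≠ 0) (hμ : μ ≠ 0) :
    poissonBracket n c (shiftPoly n a l f) (shiftPoly n a μ g) = 0 ∧
    frozenBracket n c a (shiftPoly n a l f) (shiftPoly n a μ g) = 0 := by
  obtain ⟨χf, hχf, hsf⟩ := hf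
  obtain ⟨χg, hχg, hsg⟩ := hg
  have hwf : Weak c f χf := weak_of_semi c f χf hsf
  have hwg : Weak c g χg := weak_of_semi c g χg hsg
  set T := ∑ i, ∑ j, bb c i j * shiftPoly n a l (pderiv i f) * shiftPoly n a μ (pderiv j g)
    with hT
  set P₀ := ∑ i, ∑ j, C (∑ k, c i j k * a k) * shiftPoly n a l (pderiv i f)
    * shiftPoly n a μ (pderiv j g) with hP
  have r1 : shiftPoly n a μ (Dop χf g) * shiftPoly n a l f = 0 := by
    by_cases hf0 : f = 0
    · rw [hf0]
      show _ * bind₁ _ (0 : MvPolynomial (Fin n) ℂ) = 0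
      rw [map_zero, mul_zero]
    · rw [vanish hskew hwg hwf hχg hf0]
      show bind₁ _ (0 : MvPolynomial (Fin n) ℂ) * _ = 0
      rw [map_zero, zero_mul]
  have r2 : shiftPoly n a l (Dop χg f) * shiftPoly n a μ g = 0 := by
    by_cases hg0 : g = 0
    · rw [hg0]
      show _ * bind₁ _ (0 : MvPolynomial (Fin n) ℂ) = 0
      rw [map_zero, mul_zero]
    · rw [vanish hskew hwf hwg hχf hg0]
      show bind₁ _ (0 : MvPolynomial (Fin n) ℂ) * _ = 0
      rw [map_zero, zero_mul]
  have e1 : P₀ + C l * T = 0 := by rw [hP, hT, E1 hwf a l μ, r1]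
  have e2 : P₀ + C μ * T = 0 := by rw [hP, hT, E2 hskew hwg a l μ, r2, neg_zero]
  have hTP : T = 0 ∧ P₀ = 0 := by
    by_cases hlμ : l = μ
    · subst hlμ
      have hP0 : P₀ = 0 := by
        have hz := frozen_unshifted_zero hskew hwf hwg hχf hχg a
        have : P₀ = bind₁ (fun k => C (a k) + C l * X k)
            (∑ i, ∑ j, C (∑ k, c i j k * a k) * pderiv i f * pderiv j g) := by
          rw [hP, map_sum]
          refine Finset.sum_congr rfl fun i _ => ?_
          rw [map_sum]
          refine Finset.sum_congr rfl fun j _ => ?_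
          rw [map_mul, map_mul, bind₁_C_right]
          rfl
        rw [this, hz, map_zero]
      refine ⟨?_, hP0⟩
      have hCT : C l * T = 0 := by
        rw [hP0, zero_add] at e1
        exact e1
      rcases mul_eq_zero.1 hCT with h | h
      · exact absurd (C_eq_zero.1 h) hl
      · exact h
    · have hsub : C (l - μ) * T = 0 := by
        have h := congrArg₂ (· - ·) e1 e2
        simp only [sub_zero] at h
        calc C (l - μ) * T = P₀ + C l * T - (P₀ + C μ * T) := by
              rw [map_sub]; ring
          _ = 0 := by rw [e1, e2, sub_zero]
      have hT0 : T = 0 := by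
        rcases mul_eq_zero.1 hsub with h | h
        · exact absurd (C_eq_zero.1 h) (sub_ne_zero.2 hlμ)
        · exact h
      refine ⟨hT0, ?_⟩
      rw [hT0, mul_zero, add_zero] at e1
      exact e1
  obtain ⟨hT0, hP0⟩ := hTP
  constructor
  · rw [poissonBracket_eq]
    calc ∑ i, ∑ j, bb c i j * pderiv i (shiftPoly n a l f) * pderiv j (shiftPoly n a μ g)
        = ∑ i, ∑ j, C (l * μ) * (bb c i j * shiftPoly n a l (pderiv i f)
          * shiftPoly n a μ (pderiv j g)) := by
          refine Finset.sum_congr rfl fun i _ => Finset.sum_congr rfl fun j _ => ?_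
          rw [pderiv_shift, pderiv_shift, map_mul]
          ring
      _ = C (l * μ) * T := by rw [mulconst2, hT]
      _ = 0 := by rw [hT0, mul_zero]
  · show (∑ i, ∑ j, C (∑ k, c i j k * a k) * pderiv i (shiftPoly n a l f)
      * pderiv j (shiftPoly n a μ g)) = 0
    calc ∑ i, ∑ j, C (∑ k, c i j k * a k) * pderiv i (shiftPoly n a l f)
        * pderiv j (shiftPoly n a μ g)
        = ∑ i, ∑ j, C (l * μ) * (C (∑ k, c i j k * a k) * shiftPoly n a l (pderiv i f)
          * shiftPoly n a μ (pderiv j g)) := by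
          refine Finset.sum_congr rfl fun i _ => Finset.sum_congr rfl fun j _ => ?_
          rw [pderiv_shift, pderiv_shift, map_mul]
          ring
      _ = C (l * μ) * P₀ := by rw [mulconst2, hP]
      _ = 0 := by rw [hP0, mul_zero]
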